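/- The iterated limit lim_{ε → 0⁺} lim_{n→∞} ε² · ( 1 − e^{−1/(n ε²)} )² · Σ_{k=2}^n (n+1−k) · e^{−(k−1)/(n ε²)} equals 1; that is, for each fixed ε > 0 the inner limit over n exists, and the resulting function of ε tends to 1 as ε → 0⁺. -/

import Mathlib

open Filter

lemma geom_aux (x : ℝ) : ∀ n : ℕ, 1 ≤ n →
    (1 - x) * ∑ k ∈ Finset.Icc 2 n, x ^ (k - 1) = x - x ^ n := by
  intro n hn
  induction n with
  | zero => omega
  | succ m ih =>
    rcases Nat.lt_or_ge m 1 with h | h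
    · interval_cases m
      simp
    · rw [Finset.sum_Icc_succ_top (by omega : 2 ≤ m + 1), mul_add, ih h]
      have : m + 1 - 1 = m := rfl
      rw [this]
      ring

lemma key_id (x : ℝ) : ∀ n : ℕ,
    (1 - x) ^ 2 * ∑ k ∈ Finset.Icc 2 n, ((n + 1 - k : ℕ) : ℝ) * x ^ (k - 1)
      = n * x * (1 - x) - x + x ^ (n + 1) := by
  intro n
  induction n with
  | zero => simp
  | succ m ih =>
    rcases Nat.lt_or_ge m 1 with h | h
    · interval_cases m
      norm_num [Finset.Icc_self]
      ring
    · have split : ∑ k ∈ Finset.Icc 2 (m + 1), ((m + 1 + 1 - k : ℕ) : ℝ) * x ^ (k - 1)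
          = (∑ k ∈ Finset.Icc 2 m, ((m + 1 - k : ℕ) : ℝ) * x ^ (k - 1))
            + (∑ k ∈ Finset.Icc 2 m, x ^ (k - 1)) + x ^ m := by
        rw [Finset.sum_Icc_succ_top (by omega : 2 ≤ m + 1)]
        have htop : ((m + 1 + 1 - (m + 1) : ℕ) : ℝ) = 1 := by norm_num
        rw [htop, one_mul]
        have : m + 1 - 1 = m := rfl
        rw [this]
        congr 1
        rw [← Finset.sum_add_distrib]
        apply Finset.sum_congr rfl
        intro k hk
        simp only [Finset.mem_Icc] at hk
        have : (m + 1 + 1 - k : ℕ) = (m + 1 - k) + 1 := by omega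
        rw [this]
        push_cast
        ring
      rw [split]
      have hg := geom_aux x m h
      have expand : (1 - x) ^ 2 * ((∑ k ∈ Finset.Icc 2 m, ((m + 1 - k : ℕ) : ℝ) * x ^ (k - 1))
            + (∑ k ∈ Finset.Icc 2 m, x ^ (k - 1)) + x ^ m)
          = (1 - x) ^ 2 * (∑ k ∈ Finset.Icc 2 m, ((m + 1 - k : ℕ) : ℝ) * x ^ (k - 1))
            + (1 - x) * ((1 - x) * ∑ k ∈ Finset.Icc 2 m, x ^ (k - 1)) + (1 - x) ^ 2 * x ^ m := by
        ring
      rw [expand, ih, hg]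
      push_cast
      ring

theorem weighted_exp_sum_iterated_limit :
    ∃ L : ℝ → ℝ,
      (∀ ε : ℝ, 0 < ε →
          Tendsto (fun n : ℕ =>
              ε ^ 2 * (1 - Real.exp (-1 / (n * ε ^ 2))) ^ 2 *
                ∑ k ∈ Finset.Icc 2 n,
                  ((n + 1 - k : ℕ) : ℝ) * Real.exp (-((k : ℝ) - 1) / (n * ε ^ 2)))
            atTop (nhds (L ε))) ∧
        Tendsto L (nhdsWithin 0 (Set.Ioi 0)) (nhds 1) := by
  refine ⟨fun ε => 1 - ε ^ 2 + ε ^ 2 * Real.exp (-1 / ε ^ 2), ?_, ?_⟩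
  · intro ε hε
    have hε2 : (0:ℝ) < ε ^ 2 := by positivity
    set u : ℕ → ℝ := fun n => -1 / (n * ε ^ 2) with hu_def
    have hmul : Tendsto (fun n : ℕ => (n : ℝ) * ε ^ 2) atTop atTop :=
      (tendsto_natCast_atTop_atTop).atTop_mul_const hε2
    have hu0 : Tendsto u atTop (nhds 0) := by
      have := (tendsto_inv_atTop_zero.comp hmul).neg
      simpa [hu_def, Function.comp, neg_div, one_div] using this
    have hune : ∀ n : ℕ, 1 ≤ n → u n ≠ 0 := by
      intro n hn
      have hpos : (0:ℝ) < n * ε ^ 2 := by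
        have : (0:ℝ) < (n:ℝ) := by exact_mod_cast hn
        positivity
      exact ne_of_lt (div_neg_of_neg_of_pos (by norm_num) hpos)
    have hu : Tendsto u atTop (nhdsWithin 0 {(0:ℝ)}ᶜ) := by
      apply tendsto_nhdsWithin_of_tendsto_nhds_of_eventually_within _ hu0
      filter_upwards [eventually_ge_atTop 1] with n hn
      exact hune n hn
    have hslope : Tendsto (fun n => (Real.exp (u n) - 1) / u n) atTop (nhds 1) := by
      have h := (hasDerivAt_iff_tendsto_slope.mp (Real.hasDerivAt_exp 0)).comp hu
      simpa [slope_fun_def, Real.exp_zero, Function.comp_def, div_eq_inv_mul] using h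
    have hB : Tendsto (fun n : ℕ => (n : ℝ) * (1 - Real.exp (u n))) atTop (nhds (1 / ε ^ 2)) := by
      have h := hslope.div_const (ε ^ 2)
      apply h.congr'
      filter_upwards [eventually_ge_atTop 1] with n hn
      have hne : ((n:ℝ)) ≠ 0 := by
        have : (0:ℝ) < (n:ℝ) := by exact_mod_cast hn
        exact ne_of_gt this
      simp only [hu_def]
      field_simp
      ring
    have hA : Tendsto (fun n : ℕ => Real.exp (u n)) atTop (nhds 1) := by
      have := (Real.continuous_exp.tendsto 0).comp hu0
      simpa [Real.exp_zero, Function.comp_def] using this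
    -- main limit of the closed form
    have hmain : Tendsto (fun n : ℕ =>
        ε ^ 2 * (Real.exp (u n) * ((n : ℝ) * (1 - Real.exp (u n))) - Real.exp (u n)
          + Real.exp (u n) * Real.exp (-1 / ε ^ 2)))
        atTop (nhds (ε ^ 2 * (1 * (1 / ε ^ 2) - 1 + 1 * Real.exp (-1 / ε ^ 2)))) :=
      tendsto_const_nhds.mul (((hA.mul hB).sub hA).add (hA.mul tendsto_const_nhds))
    have hval : ε ^ 2 * (1 * (1 / ε ^ 2) - 1 + 1 * Real.exp (-1 / ε ^ 2))
        = 1 - ε ^ 2 + ε ^ 2 * Real.exp (-1 / ε ^ 2) := by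
      field_simp
    rw [hval] at hmain
    apply hmain.congr'
    filter_upwards [eventually_ge_atTop 1] with n hn
    symm
    have hne : ((n:ℝ)) ≠ 0 := by
      have : (0:ℝ) < (n:ℝ) := by exact_mod_cast hn
      exact ne_of_gt this
    have hsum : ∀ k ∈ Finset.Icc 2 n,
        ((n + 1 - k : ℕ) : ℝ) * Real.exp (-((k : ℝ) - 1) / (n * ε ^ 2))
          = ((n + 1 - k : ℕ) : ℝ) * Real.exp (u n) ^ (k - 1) := by
      intro k hk
      simp only [Finset.mem_Icc] at hk
      congr 1
      rw [← Real.exp_nat_mul]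
      congr 1
      have : ((k - 1 : ℕ) : ℝ) = (k : ℝ) - 1 := by
        have : 1 ≤ k := by omega
        push_cast [Nat.cast_sub this]
        ring
      rw [this, hu_def]
      field_simp
    have hxn : Real.exp (u n) ^ n = Real.exp (-1 / ε ^ 2) := by
      rw [← Real.exp_nat_mul]
      congr 1
      simp only [hu_def]
      field_simp
    calc ε ^ 2 * (1 - Real.exp (-1 / (n * ε ^ 2))) ^ 2 *
          ∑ k ∈ Finset.Icc 2 n, ((n + 1 - k : ℕ) : ℝ) * Real.exp (-((k : ℝ) - 1) / (n * ε ^ 2))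
        = ε ^ 2 * ((1 - Real.exp (u n)) ^ 2 *
          ∑ k ∈ Finset.Icc 2 n, ((n + 1 - k : ℕ) : ℝ) * Real.exp (u n) ^ (k - 1)) := by
          rw [Finset.sum_congr rfl hsum]
          simp only [hu_def]
          ring
      _ = ε ^ 2 * ((n : ℝ) * Real.exp (u n) * (1 - Real.exp (u n)) - Real.exp (u n)
            + Real.exp (u n) ^ (n + 1)) := by rw [key_id]
      _ = ε ^ 2 * (Real.exp (u n) * ((n : ℝ) * (1 - Real.exp (u n))) - Real.exp (u n)
            + Real.exp (u n) * Real.exp (-1 / ε ^ 2)) := by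
          rw [pow_succ (Real.exp (u n)) n, hxn]
          ring
  · -- outer limit
    have h1 : Tendsto (fun ε : ℝ => ε ^ 2) (nhdsWithin 0 (Set.Ioi 0)) (nhds 0) := by
      have : Tendsto (fun ε : ℝ => ε ^ 2) (nhds 0) (nhds 0) := by
        simpa using (continuous_pow 2).tendsto (0:ℝ)
      exact this.mono_left nhdsWithin_le_nhds
    have h2 : Tendsto (fun ε : ℝ => ε ^ 2 * Real.exp (-1 / ε ^ 2))
        (nhdsWithin 0 (Set.Ioi 0)) (nhds 0) := by
      apply squeeze_zero' (g := fun ε : ℝ => ε ^ 2) ?_ ?_ h1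
      · filter_upwards with ε
        exact mul_nonneg (sq_nonneg ε) (Real.exp_pos _).le
      · filter_upwards [self_mem_nhdsWithin] with ε (hε : ε ∈ Set.Ioi 0)
        have hε2 : (0:ℝ) < ε ^ 2 := pow_pos (Set.mem_Ioi.mp hε) 2
        have hle : Real.exp (-1 / ε ^ 2) ≤ 1 := by
          rw [Real.exp_le_one_iff]
          exact le_of_lt (div_neg_of_neg_of_pos (by norm_num) hε2)
        nlinarith
    have h3 := ((tendsto_const_nhds (x := (1:ℝ)) (f := nhdsWithin (0:ℝ) (Set.Ioi 0))).sub h1).add h2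
    simpa using h3
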